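/- (Even part of the Laguerre-to-Hermite expansion.) For every nonnegative integer m, ₂F₃(-m, (1-2m)/2; 1/2, 1/2, 1; x²/4) = Σ_{k=0}^{m} ((-2m)_{2k} / (2^{2k} ((2k)!)²)) · ₂F₂((2k-2m)/2, (2k+1-2m)/2; (2k+1)/2, (2k+2)/2; 1/4) · H_{2k}(x), where the ₂F₂ series terminate. -/

import Mathlib

open Finset

/-- Pochhammer (rising factorial) symbol on the reals. -/
noncomputable def poch (a : ℝ) (n : ℕ) : ℝ := ∏ i ∈ Finset.range n, (a + i)

/-- Physicists' Hermite polynomial. -/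
noncomputable def hermiteP (N : ℕ) (x : ℝ) : ℝ :=
  (N.factorial : ℝ) * ∑ k ∈ Finset.range (N / 2 + 1),
    (-1 : ℝ) ^ k * (2 * x) ^ (N - 2 * k) / ((k.factorial : ℝ) * ((N - 2 * k).factorial : ℝ))

lemma poch_succ (a : ℝ) (n : ℕ) : poch a (n+1) = poch a n * (a + n) :=
  Finset.prod_range_succ _ _
lemma poch_zero (a : ℝ) : poch a 0 = 1 := rfl

lemma fact_ne (n : ℕ) : ((n.factorial : ℝ)) ≠ 0 := Nat.cast_ne_zero.2 (Nat.factorial_ne_zero _)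

lemma poch_one (n : ℕ) : poch 1 n = n.factorial := by
  induction n with
  | zero => simp [poch_zero]
  | succ n ih => rw [poch_succ, ih]; push_cast [Nat.factorial_succ]; ring

lemma poch_half (n : ℕ) : poch (1/2) n = (2*n).factorial / (4^n * n.factorial) := by
  induction n with
  | zero => simp [poch_zero]
  | succ n ih =>
    rw [poch_succ, ih]
    have h1 : (n.factorial : ℝ) ≠ 0 := Nat.cast_ne_zero.2 n.factorial_ne_zero
    have h2 : (4:ℝ)^n ≠ 0 := by positivity
    have h3 : ((n+1).factorial : ℝ) ≠ 0 := Nat.cast_ne_zero.2 (n+1).factorial_ne_zero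
    have : 2*(n+1) = (2*n+1)+1 := by ring
    rw [this]
    push_cast [Nat.factorial_succ]
    field_simp
    ring

lemma poch_neg_nat (m : ℕ) : ∀ s ≤ m, poch (-(m:ℝ)) s = (-1)^s * m.factorial / (m-s).factorial := by
  intro s
  induction s with
  | zero => intro _; rw [poch_zero]; simp [div_self (fact_ne m)]
  | succ s ih =>
    intro hs
    have hs' : s ≤ m := by omega
    rw [poch_succ, ih hs']
    have e1 : m - s = (m - (s+1)) + 1 := by omega
    rw [e1, Nat.factorial_succ]
    have c1 : (((m - (s+1)) + 1 : ℕ) : ℝ) = (m:ℝ) - s := by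
      have h : (m - (s+1)) + 1 = m - s := by omega
      rw [h, Nat.cast_sub hs']
    have hne : (((m - (s+1)) + 1 : ℕ) : ℝ) * ((m - (s+1)).factorial : ℝ) ≠ 0 :=
      mul_ne_zero (by positivity) (fact_ne _)
    rw [div_mul_eq_mul_div, div_eq_div_iff (by push_cast at hne ⊢; exact hne) (fact_ne _)]
    push_cast [c1]
    ring

lemma poch_half_sub (m : ℕ) : ∀ s ≤ m, poch (1/2 - m) s =
    (-1)^s * (2*m).factorial * (m-s).factorial / (4^s * m.factorial * (2*m-2*s).factorial) := by
  intro s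
  induction s with
  | zero =>
    intro _; rw [poch_zero]
    rw [Nat.sub_zero, Nat.sub_zero, eq_div_iff (by positivity)]
    ring
  | succ s ih =>
    intro hs
    have hs' : s ≤ m := by omega
    rw [poch_succ, ih hs']
    have e1 : m - s = (m - (s+1)) + 1 := by omega
    have e2 : 2*m - 2*s = (2*m - 2*(s+1)) + 1 + 1 := by omega
    rw [e1, e2, Nat.factorial_succ, Nat.factorial_succ, Nat.factorial_succ]
    have c1 : (((m - (s+1)) + 1 : ℕ) : ℝ) = (m:ℝ) - s := by
      have h : (m - (s+1)) + 1 = m - s := by omega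
      rw [h, Nat.cast_sub hs']
    have c2 : (((2*m - 2*(s+1)) + 1 + 1 : ℕ) : ℝ) = 2*(m:ℝ) - 2*s := by
      have h : (2*m - 2*(s+1)) + 1 + 1 = 2*m - 2*s := by omega
      rw [h, Nat.cast_sub (by omega : 2*s ≤ 2*m)]; push_cast; ring
    have c3 : (((2*m - 2*(s+1)) + 1 : ℕ) : ℝ) = 2*(m:ℝ) - 2*s - 1 := by
      push_cast at c2 ⊢; linarith
    rw [div_mul_eq_mul_div, div_eq_div_iff (by positivity) (by positivity)]
    push_cast [c1, c2, c3]
    ring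

lemma poch_add_half (k : ℕ) : ∀ j : ℕ, poch ((k:ℝ) + 1/2) j =
    (2*k+2*j).factorial * k.factorial / (4^j * (k+j).factorial * (2*k).factorial) := by
  intro j
  induction j with
  | zero =>
    rw [poch_zero]
    simp only [Nat.mul_zero, Nat.add_zero, pow_zero, one_mul]
    rw [mul_comm, div_self (mul_ne_zero (fact_ne _) (fact_ne _))]
  | succ j ih =>
    rw [poch_succ, ih]
    have e1 : 2*k + 2*(j+1) = (2*k+2*j) + 1 + 1 := by ring
    have e2 : k + (j+1) = (k+j) + 1 := by ring
    rw [e1, e2, Nat.factorial_succ, Nat.factorial_succ, Nat.factorial_succ]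
    rw [div_mul_eq_mul_div, div_eq_div_iff (by positivity) (by positivity)]
    push_cast
    ring

lemma poch_nat_succ (k : ℕ) : ∀ j : ℕ, poch ((k:ℝ) + 1) j = (k+j).factorial / k.factorial := by
  intro j
  induction j with
  | zero => rw [poch_zero]; simp [div_self (fact_ne k)]
  | succ j ih =>
    rw [poch_succ, ih]
    have e2 : k + (j+1) = (k+j) + 1 := by ring
    rw [e2, Nat.factorial_succ]
    rw [div_mul_eq_mul_div, div_eq_div_iff (fact_ne _) (fact_ne _)]
    push_cast
    ring

lemma poch_pair (M : ℕ) : ∀ j ≤ M, poch (-(M:ℝ)) j * poch (1/2 - M) j =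
    (2*M).factorial / (4^j * (2*M-2*j).factorial) := by
  intro j hj
  rw [poch_neg_nat M j hj, poch_half_sub M j hj]
  have he : (-1:ℝ)^j * (-1)^j = 1 := by rw [← pow_add]; exact Even.neg_one_pow ⟨j, rfl⟩
  rw [div_mul_div_comm, div_eq_div_iff (by positivity) (by positivity)]
  have hE : (-1:ℝ)^(j*2) = 1 := by rw [mul_comm, pow_mul]; norm_num
  ring_nf
  simp only [hE]
  ring

lemma lhs_term (m s : ℕ) (hs : s ≤ m) (x : ℝ) :
    poch (-(m : ℝ)) s * poch ((1 - 2 * (m : ℝ)) / 2) s * (x ^ 2 / 4) ^ s /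
          (poch (1 / 2) s * poch (1 / 2) s * poch 1 s * (s.factorial : ℝ)) =
      (2*m).factorial / ((2*m-2*s).factorial * (((2*s).factorial:ℝ))^2) * x^(2*s) := by
  have h1 : (1 - 2 * (m:ℝ)) / 2 = 1/2 - m := by ring
  rw [h1]
  rw [poch_pair m s hs, poch_half, poch_one]
  have h2 : ((2*s).factorial : ℝ) ≠ 0 := fact_ne _
  have h3 : ((2*m-2*s).factorial : ℝ) ≠ 0 := fact_ne _
  have h4 : (s.factorial : ℝ) ≠ 0 := fact_ne _
  have h5 : (4:ℝ)^s ≠ 0 := by positivity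
  field_simp
  ring_nf; rw [mul_assoc, ← mul_pow]; norm_num

lemma alt_sum (n : ℕ) :
    ∑ i ∈ range (n+1), (-1:ℝ)^i / ((i.factorial : ℝ) * ((n-i).factorial : ℝ))
      = if n = 0 then 1 else 0 := by
  have key : ∀ i ∈ range (n+1), (-1:ℝ)^i / ((i.factorial : ℝ) * ((n-i).factorial : ℝ))
      = ((-1:ℝ)^i * (n.choose i : ℝ)) / (n.factorial : ℝ) := by
    intro i hi
    have hi' : i ≤ n := by simpa [Nat.lt_succ_iff] using hi
    have h := Nat.choose_mul_factorial_mul_factorial hi'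
    have h' : ((n.choose i : ℝ)) * (i.factorial : ℝ) * ((n-i).factorial : ℝ) = (n.factorial : ℝ) := by
      exact_mod_cast h
    rw [div_eq_div_iff (mul_ne_zero (fact_ne i) (fact_ne _)) (fact_ne n)]
    linear_combination (-(-1:ℝ)^i) * h'
  rw [Finset.sum_congr rfl key, ← Finset.sum_div]
  have h2 : ∑ i ∈ range (n+1), ((-1:ℝ)^i * (n.choose i : ℝ)) = if n = 0 then 1 else 0 := by
    have h3 := Int.alternating_sum_range_choose (n := n)
    have h4 : ∑ i ∈ range (n+1), ((-1:ℝ)^i * (n.choose i : ℝ)) = ((if n = 0 then 1 else 0 : ℤ) : ℝ) := by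
      exact_mod_cast h3
    rw [h4]
    split <;> norm_num
  rw [h2]
  by_cases h : n = 0 <;> simp [h]

noncomputable def Fterm (m : ℕ) (x : ℝ) (k j i : ℕ) : ℝ :=
  ((2*m).factorial : ℝ) * (-1)^i * (2*x)^(2*(k-i)) /
    (4^(k+j) * ((2*m-2*k-2*j).factorial:ℝ) * ((2*k+2*j).factorial:ℝ) * (j.factorial:ℝ) *
      (i.factorial:ℝ) * ((2*(k-i)).factorial:ℝ))

lemma reindex (m : ℕ) (x : ℝ) :
    ∑ k ∈ range (m+1), ∑ j ∈ range (m-k+1), ∑ i ∈ range (k+1), Fterm m x k j i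
    = ∑ s ∈ range (m+1), ∑ n ∈ range (m-s+1), ∑ i ∈ range (n+1), Fterm m x (s+i) (n-i) i := by
  rw [Finset.sum_sigma', Finset.sum_sigma', Finset.sum_sigma', Finset.sum_sigma']
  refine Finset.sum_nbij' (fun q => ⟨⟨q.1.1 - q.2, q.2 + q.1.2⟩, q.2⟩)
    (fun q => ⟨⟨q.1.1 + q.2, q.1.2 - q.2⟩, q.2⟩) ?_ ?_ ?_ ?_ ?_
  · rintro ⟨⟨k, j⟩, i⟩ h
    simp only [Finset.mem_sigma, Finset.mem_range] at h ⊢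
    omega
  · rintro ⟨⟨s, n⟩, i⟩ h
    simp only [Finset.mem_sigma, Finset.mem_range] at h ⊢
    omega
  · rintro ⟨⟨k, j⟩, i⟩ h
    simp only [Finset.mem_sigma, Finset.mem_range] at h
    simp only [show k - i + i = k by omega, show i + j - i = j by omega]
  · rintro ⟨⟨s, n⟩, i⟩ h
    simp only [Finset.mem_sigma, Finset.mem_range] at h
    simp only [show s + i - i = s by omega, show i + (n - i) = n by omega]
  · rintro ⟨⟨k, j⟩, i⟩ h
    simp only [Finset.mem_sigma, Finset.mem_range] at h
    have e1 : k - i + i = k := by omega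
    have e2 : i + j - i = j := by omega
    simp only [e1, e2]

lemma collapse (m s : ℕ) (hs : s ≤ m) (x : ℝ) :
    ∑ n ∈ range (m-s+1), ∑ i ∈ range (n+1), Fterm m x (s+i) (n-i) i
    = ((2*m).factorial : ℝ) / (((2*m-2*s).factorial : ℝ) * (((2*s).factorial : ℝ))^2) * x^(2*s) := by
  have step1 : ∀ n ∈ range (m-s+1), ∑ i ∈ range (n+1), Fterm m x (s+i) (n-i) i
      = (((2*m).factorial : ℝ) * (2*x)^(2*s) /
          (4^(s+n) * ((2*m-2*s-2*n).factorial : ℝ) * ((2*s+2*n).factorial : ℝ) * ((2*s).factorial : ℝ)))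
        * (if n = 0 then 1 else 0) := by
    intro n hn
    have hn' : n ≤ m - s := by simpa [Nat.lt_succ_iff] using hn
    rw [← alt_sum n, Finset.mul_sum]
    refine Finset.sum_congr rfl (fun i hi => ?_)
    have hi' : i ≤ n := by simpa [Nat.lt_succ_iff] using hi
    unfold Fterm
    have e1 : s + i - i = s := by omega
    have e2 : s + i + (n - i) = s + n := by omega
    have e3 : 2*m - 2*(s+i) - 2*(n-i) = 2*m - 2*s - 2*n := by omega
    have e4 : 2*(s+i) + 2*(n-i) = 2*s + 2*n := by omega
    rw [e1, e2, e3, e4]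
    have h1 : ((2*m-2*s-2*n).factorial : ℝ) ≠ 0 := fact_ne _
    have h2 : ((2*s+2*n).factorial : ℝ) ≠ 0 := fact_ne _
    have h3 : ((2*s).factorial : ℝ) ≠ 0 := fact_ne _
    have h4 : ((n-i).factorial : ℝ) ≠ 0 := fact_ne _
    have h5 : (i.factorial : ℝ) ≠ 0 := fact_ne _
    have h6 : (4:ℝ)^(s+n) ≠ 0 := by positivity
    field_simp
  rw [Finset.sum_congr rfl step1]
  rw [Finset.sum_eq_single_of_mem 0 (by simp)]
  · simp only [if_pos rfl, ↓reduceIte, mul_one, Nat.add_zero, Nat.mul_zero, Nat.sub_zero]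
    have hx : (2*x)^(2*s) = 4^s * x^(2*s) := by
      rw [mul_pow]
      congr 1
      rw [pow_mul]
      norm_num
    rw [hx]
    have h1 : ((2*m-2*s).factorial : ℝ) ≠ 0 := fact_ne _
    have h3 : ((2*s).factorial : ℝ) ≠ 0 := fact_ne _
    have h6 : (4:ℝ)^s ≠ 0 := by positivity
    field_simp
  · intro n _ hn0
    simp [hn0]

lemma rhs_term (m k : ℕ) (hk : k ≤ m) (x : ℝ) :
    (poch (-2 * (m : ℝ)) (2 * k) / (2 ^ (2 * k) * (((2 * k).factorial : ℝ)) ^ 2)) *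
        (∑ j ∈ Finset.range (m - k + 1),
          poch ((2 * (k : ℝ) - 2 * m) / 2) j * poch ((2 * (k : ℝ) + 1 - 2 * m) / 2) j *
            (1 / 4 : ℝ) ^ j /
          (poch ((2 * (k : ℝ) + 1) / 2) j * poch ((2 * (k : ℝ) + 2) / 2) j * (j.factorial : ℝ))) *
        hermiteP (2 * k) x
    = ∑ j ∈ Finset.range (m - k + 1), ∑ i ∈ Finset.range (k + 1), Fterm m x k j i := by
  simp only [Fterm]
  have hsum : (∑ j ∈ Finset.range (m - k + 1),
      poch ((2 * (k : ℝ) - 2 * m) / 2) j * poch ((2 * (k : ℝ) + 1 - 2 * m) / 2) j *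
        (1 / 4 : ℝ) ^ j /
      (poch ((2 * (k : ℝ) + 1) / 2) j * poch ((2 * (k : ℝ) + 2) / 2) j * (j.factorial : ℝ)))
      = ∑ j ∈ Finset.range (m - k + 1),
        ((2*(m-k)).factorial : ℝ) * ((2*k).factorial : ℝ) /
          (4^j * ((2*(m-k)-2*j).factorial : ℝ) * ((2*k+2*j).factorial : ℝ) * (j.factorial : ℝ)) := by
    refine Finset.sum_congr rfl (fun j hj => ?_)
    have hj' : j ≤ m - k := by simpa [Nat.lt_succ_iff] using hj
    have a1 : (2 * (k : ℝ) - 2 * m) / 2 = -((m-k:ℕ):ℝ) := by rw [Nat.cast_sub hk]; ring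
    have a2 : (2 * (k : ℝ) + 1 - 2 * m) / 2 = 1/2 - ((m-k:ℕ):ℝ) := by rw [Nat.cast_sub hk]; ring
    have a3 : (2 * (k : ℝ) + 1) / 2 = (k:ℝ) + 1/2 := by ring
    have a4 : (2 * (k : ℝ) + 2) / 2 = (k:ℝ) + 1 := by ring
    rw [a1, a2, a3, a4, poch_pair (m-k) j hj', poch_add_half, poch_nat_succ]
    have h1 : ((2*(m-k)-2*j).factorial : ℝ) ≠ 0 := fact_ne _
    have h2 : ((2*k+2*j).factorial : ℝ) ≠ 0 := fact_ne _
    have h3 : ((k+j).factorial : ℝ) ≠ 0 := fact_ne _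
    have h4 : (k.factorial : ℝ) ≠ 0 := fact_ne _
    have h5 : (j.factorial : ℝ) ≠ 0 := fact_ne _
    have h6 : ((2*k).factorial : ℝ) ≠ 0 := fact_ne _
    have h7 : (4:ℝ)^j ≠ 0 := by positivity
    field_simp
    ring_nf; rw [← mul_pow]; norm_num
  have hP : poch (-2 * (m : ℝ)) (2 * k) = ((2*m).factorial : ℝ) / ((2*m-2*k).factorial : ℝ) := by
    have : (-2 * (m:ℝ)) = -((2*m : ℕ) : ℝ) := by push_cast; ring
    rw [this, poch_neg_nat (2*m) (2*k) (by omega)]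
    have hs : (-1:ℝ)^(2*k) = 1 := by rw [pow_mul]; norm_num
    rw [hs, one_mul]
  rw [hsum, hP, hermiteP]
  have h2k : 2 * k / 2 = k := by omega
  rw [h2k]
  rw [Finset.mul_sum, Finset.sum_mul]
  refine Finset.sum_congr rfl (fun j hj => ?_)
  rw [Finset.mul_sum, Finset.mul_sum]
  refine Finset.sum_congr rfl (fun i hi => ?_)
  have hj' : j ≤ m - k := by simpa [Nat.lt_succ_iff] using hj
  have hi' : i ≤ k := by simpa [Nat.lt_succ_iff] using hi
  have e1 : 2*(m-k) = 2*m-2*k := by omega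
  have e2 : 2*(m-k)-2*j = 2*m-2*k-2*j := by omega
  have e3 : 2*k-2*i = 2*(k-i) := by omega
  rw [e2, e1, e3]
  have h1 : ((2*m-2*k).factorial : ℝ) ≠ 0 := fact_ne _
  have h2 : ((2*m-2*k-2*j).factorial : ℝ) ≠ 0 := fact_ne _
  have h3 : ((2*k+2*j).factorial : ℝ) ≠ 0 := fact_ne _
  have h4 : (j.factorial : ℝ) ≠ 0 := fact_ne _
  have h5 : (i.factorial : ℝ) ≠ 0 := fact_ne _
  have h6 : ((2*(k-i)).factorial : ℝ) ≠ 0 := fact_ne _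
  have h7 : ((2*k).factorial : ℝ) ≠ 0 := fact_ne _
  have h8 : (4:ℝ)^j ≠ 0 := by positivity
  have h9 : (4:ℝ)^k ≠ 0 := by positivity
  have h10 : (2:ℝ)^(2*k) = 4^k := by rw [pow_mul]; norm_num
  rw [h10]
  field_simp
  ring

/-- Even part of the Laguerre-to-Hermite expansion. -/
theorem even_part_laguerre_to_hermite (m : ℕ) (x : ℝ) :
    (∑ s ∈ Finset.range (m + 1),
        poch (-(m : ℝ)) s * poch ((1 - 2 * (m : ℝ)) / 2) s * (x ^ 2 / 4) ^ s /
          (poch (1 / 2) s * poch (1 / 2) s * poch 1 s * (s.factorial : ℝ))) =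
      ∑ k ∈ Finset.range (m + 1),
        (poch (-2 * (m : ℝ)) (2 * k) / (2 ^ (2 * k) * (((2 * k).factorial : ℝ)) ^ 2)) *
        (∑ j ∈ Finset.range (m - k + 1),
          poch ((2 * (k : ℝ) - 2 * m) / 2) j * poch ((2 * (k : ℝ) + 1 - 2 * m) / 2) j *
            (1 / 4 : ℝ) ^ j /
          (poch ((2 * (k : ℝ) + 1) / 2) j * poch ((2 * (k : ℝ) + 2) / 2) j * (j.factorial : ℝ))) *
        hermiteP (2 * k) x := by
  rw [Finset.sum_congr rfl (fun s hs =>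
    lhs_term m s (Nat.lt_succ_iff.mp (Finset.mem_range.mp hs)) x)]
  rw [Finset.sum_congr rfl (fun k hk =>
    rhs_term m k (Nat.lt_succ_iff.mp (Finset.mem_range.mp hk)) x)]
  rw [reindex]
  exact Finset.sum_congr rfl (fun s hs =>
    (collapse m s (Nat.lt_succ_iff.mp (Finset.mem_range.mp hs)) x).symm)
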